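/- Let e_1,…,e_d be the standard basis of ℝ^d, k ∈ [d], and let ℋ_k consist of the 2(d−k+1) halfspaces H_i^+ = {x : e_i·x ≥ 0} and H_i^− = {x : e_i·x ≤ 0} for i ≤ d−k+1. Then ⋂ℋ_k is the (k−1)-dimensional subspace {x : x_1 = ⋯ = x_{d−k+1} = 0}, hence contains no k-dimensional cone, yet for every i ≤ d−k+1 both ⋂(ℋ_k \ {H_i^+}) and ⋂(ℋ_k \ {H_i^−}) contain a k-dimensional cone. -/

import Mathlib

open scoped RealInnerProductSpace

/-- The conical hull (set of nonnegative combinations) of a set `V` in `ℝ^d`. -/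
def posHull {d : ℕ} (V : Set (EuclideanSpace ℝ (Fin d))) : Set (EuclideanSpace ℝ (Fin d)) :=
  {x | ∃ (s : Finset (EuclideanSpace ℝ (Fin d))) (c : EuclideanSpace ℝ (Fin d) → ℝ),
    ↑s ⊆ V ∧ (∀ v ∈ s, 0 ≤ c v) ∧ x = ∑ v ∈ s, c v • v}

/-- The lineality set `pos A ∩ (− pos A)` of the conical hull of `A`. -/
def linealitySet {d : ℕ} (A : Set (EuclideanSpace ℝ (Fin d))) : Set (EuclideanSpace ℝ (Fin d)) :=
  posHull A ∩ (-posHull A)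

open Module Submodule
variable {d : ℕ}

def coordL (j : Fin d) : EuclideanSpace ℝ (Fin d) →ₗ[ℝ] ℝ where
  toFun x := x j
  map_add' _ _ := rfl
  map_smul' _ _ := rfl

noncomputable def ee (j : Fin d) : EuclideanSpace ℝ (Fin d) := EuclideanSpace.single j 1

lemma ee_eq_basis : ee (d := d) = ⇑(EuclideanSpace.basisFun (Fin d) ℝ).toBasis := by
  funext j
  rw [OrthonormalBasis.coe_toBasis, EuclideanSpace.basisFun_apply, ee]

lemma ee_linIndep (A : Set (Fin d)) : LinearIndependent ℝ ((↑) : (ee '' A) → EuclideanSpace ℝ (Fin d)) := by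
  have h2 := (linearIndepOn_id_range_iff (EuclideanSpace.basisFun (Fin d) ℝ).toBasis.injective).mpr
    (EuclideanSpace.basisFun (Fin d) ℝ).toBasis.linearIndependent
  refine h2.mono ?_
  rw [← ee_eq_basis]
  exact Set.image_subset_range _ _

lemma ee_inj : Function.Injective (ee (d := d)) := by
  rw [ee_eq_basis]; exact (EuclideanSpace.basisFun (Fin d) ℝ).toBasis.injective

lemma ee_apply (j j' : Fin d) : ee j j' = if j' = j then 1 else 0 := EuclideanSpace.single_apply j 1 j'

lemma span_ee_card (A : Finset (Fin d)) :
    finrank ℝ (span ℝ (ee '' ↑A : Set (EuclideanSpace ℝ (Fin d)))) = A.card := by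
  classical
  haveI : Fintype (ee '' (↑A : Set (Fin d)) : Set (EuclideanSpace ℝ (Fin d))) :=
    (A.finite_toSet.image ee).fintype
  rw [finrank_span_set_eq_card (ee_linIndep _)]
  rw [Set.toFinset_image]
  rw [Finset.card_image_of_injective _ ee_inj]
  simp

lemma sum_ee_apply (T : Finset (Fin d)) (x : EuclideanSpace ℝ (Fin d)) (j' : Fin d) :
    (∑ j ∈ T, x j • ee j) j' = if j' ∈ T then x j' else 0 := by
  classical
  have : (∑ j ∈ T, x j • ee j) j' = coordL j' (∑ j ∈ T, x j • ee j) := rfl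
  rw [this, map_sum]
  simp only [map_smul, smul_eq_mul]
  have : ∀ j, coordL j' (ee j) = if j' = j then 1 else 0 := fun j => ee_apply j j'
  simp only [this, mul_ite, mul_one, mul_zero]
  simp [eq_comm]

lemma mem_posHull_self {V : Set (EuclideanSpace ℝ (Fin d))} {v} (hv : v ∈ V) : v ∈ posHull V :=
  ⟨{v}, fun _ => 1, by simpa, fun _ _ => zero_le_one, by simp⟩

lemma zero_mem_posHull {V : Set (EuclideanSpace ℝ (Fin d))} : 0 ∈ posHull V :=
  ⟨∅, 0, by simp, by simp, by simp⟩

lemma posHull_nonneg {V : Set (EuclideanSpace ℝ (Fin d))} (f : EuclideanSpace ℝ (Fin d) →ₗ[ℝ] ℝ)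
    (h : ∀ v ∈ V, 0 ≤ f v) : ∀ x ∈ posHull V, 0 ≤ f x := by
  rintro x ⟨s, c, hs, hc, rfl⟩
  rw [map_sum]
  exact Finset.sum_nonneg fun v hv => by
    rw [map_smul, smul_eq_mul]; exact mul_nonneg (hc v hv) (h v (hs hv))

lemma posHull_zero {V : Set (EuclideanSpace ℝ (Fin d))} (f : EuclideanSpace ℝ (Fin d) →ₗ[ℝ] ℝ)
    (h : ∀ v ∈ V, f v = 0) : ∀ x ∈ posHull V, f x = 0 := by
  rintro x ⟨s, c, hs, hc, rfl⟩
  rw [map_sum]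
  exact Finset.sum_eq_zero fun v hv => by rw [map_smul, smul_eq_mul, h v (hs hv), mul_zero]

lemma posHull_nonpos {V : Set (EuclideanSpace ℝ (Fin d))} (f : EuclideanSpace ℝ (Fin d) →ₗ[ℝ] ℝ)
    (h : ∀ v ∈ V, f v ≤ 0) : ∀ x ∈ posHull V, f x ≤ 0 := by
  intro x hx
  have := posHull_nonneg (-f) (fun v hv => by simpa using h v hv) x hx
  simpa using this

lemma span_V (i : Fin d) (T : Finset (Fin d)) (hiT : i ∉ T) (σ : ℝ) (hσ : IsUnit σ) :
    Module.finrank ℝ (span ℝ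
      (insert (σ • ee i) (ee '' ↑T ∪ -(ee '' ↑T)) : Set (EuclideanSpace ℝ (Fin d)))) = T.card + 1 := by
  classical
  have h1 : span ℝ (insert (σ • ee i) (ee '' ↑T ∪ -(ee '' ↑T)) : Set (EuclideanSpace ℝ (Fin d)))
      = span ℝ (ee '' ↑(insert i T)) := by
    rw [Submodule.span_insert, Submodule.span_union, Submodule.span_neg, sup_idem,
      Submodule.span_singleton_smul_eq hσ, Finset.coe_insert, Set.image_insert_eq,
      Submodule.span_insert]
  rw [h1, span_ee_card, Finset.card_insert_of_notMem hiT]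

lemma card_filter_ge (d m : ℕ) (h : m ≤ d) :
    (Finset.univ.filter fun j : Fin d => m ≤ (j:ℕ)).card = d - m := by
  have : (Finset.univ.filter fun j : Fin d => m ≤ (j:ℕ)) = Finset.univ.map
      ⟨fun t : Fin (d - m) => (⟨m + t, by omega⟩ : Fin d),
       fun a b hab => by simp only [Fin.mk.injEq] at hab; exact Fin.ext (by omega)⟩ := by
    ext j
    simp only [Finset.mem_filter, Finset.mem_univ, true_and, Finset.mem_map,
      Function.Embedding.coeFn_mk, Fin.ext_iff]
    constructor
    · intro hj; exact ⟨⟨j - m, by omega⟩, by show m + (j - m) = (j:ℕ); omega⟩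
    · rintro ⟨t, ht⟩; have : m + (t:ℕ) = j := ht; omega
  simp [this]

lemma V_coord (σ : ℝ) (i : Fin d) (T : Finset (Fin d)) (v : EuclideanSpace ℝ (Fin d))
    (hv : v ∈ (insert (σ • ee i) (ee '' ↑T ∪ -(ee '' ↑T)) : Set (EuclideanSpace ℝ (Fin d))))
    (j : Fin d) (hjT : ∀ t ∈ T, j ≠ t) :
    (j ≠ i → v j = 0) ∧ (j = i → v j = σ ∨ v j = 0) := by
  rcases hv with rfl | hv | hv
  · constructor
    · intro hji
      rw [PiLp.smul_apply, ee_apply, if_neg hji, smul_zero]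
    · intro hji
      left; rw [PiLp.smul_apply, ee_apply, if_pos hji, smul_eq_mul, mul_one]
  · obtain ⟨t, ht, rfl⟩ := hv
    have : ee t j = 0 := by rw [ee_apply, if_neg (hjT t (by simpa using ht))]
    exact ⟨fun _ => this, fun _ => Or.inr this⟩
  · rw [Set.mem_neg] at hv
    obtain ⟨t, ht, ht2⟩ := hv
    have hvt : v = -ee t := by rw [ht2, neg_neg]
    have : v j = 0 := by
      rw [hvt, PiLp.neg_apply, ee_apply, if_neg (hjT t (by simpa using ht)), neg_zero]
    exact ⟨fun _ => this, fun _ => Or.inr this⟩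


/-- Example 2: the `2(d-k+1)` coordinate halfspaces `{x : xᵢ ≥ 0}` and `{x : xᵢ ≤ 0}`,
`i ≤ d-k+1`, intersect in a `(k-1)`-dimensional subspace containing no `k`-dimensional
cone, yet dropping any one of them leaves an intersection containing a `k`-dimensional
cone. -/
theorem coordinate_example (d k : ℕ) (hk1 : 1 ≤ k) (hkd : k ≤ d) :
    (⋂ i : Fin d, ⋂ (_ : (i : ℕ) < d - k + 1),
        ({x : EuclideanSpace ℝ (Fin d) | 0 ≤ x i} ∩ {x | x i ≤ 0})) =
      {x : EuclideanSpace ℝ (Fin d) | ∀ i : Fin d, (i : ℕ) < d - k + 1 → x i = 0} ∧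
    (¬ ∃ (u : EuclideanSpace ℝ (Fin d)) (V : Set (EuclideanSpace ℝ (Fin d))),
        Module.finrank ℝ (Submodule.span ℝ V) = k ∧
          (fun x => u + x) '' posHull V ⊆
            {x : EuclideanSpace ℝ (Fin d) | ∀ i : Fin d, (i : ℕ) < d - k + 1 → x i = 0}) ∧
    (∀ i : Fin d, (i : ℕ) < d - k + 1 →
      (∃ V : Set (EuclideanSpace ℝ (Fin d)),
          Module.finrank ℝ (Submodule.span ℝ V) = k ∧
            posHull V ⊆ {x | x i ≤ 0} ∩
              ⋂ j : Fin d, ⋂ (_ : (j : ℕ) < d - k + 1) (_ : j ≠ i),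
                ({x : EuclideanSpace ℝ (Fin d) | 0 ≤ x j} ∩ {x | x j ≤ 0})) ∧
      (∃ V : Set (EuclideanSpace ℝ (Fin d)),
          Module.finrank ℝ (Submodule.span ℝ V) = k ∧
            posHull V ⊆ {x | 0 ≤ x i} ∩
              ⋂ j : Fin d, ⋂ (_ : (j : ℕ) < d - k + 1) (_ : j ≠ i),
                ({x : EuclideanSpace ℝ (Fin d) | 0 ≤ x j} ∩ {x | x j ≤ 0}))) := by
  classical
  set T : Finset (Fin d) := Finset.univ.filter (fun j : Fin d => d - k + 1 ≤ (j:ℕ)) with hTdef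
  have hTmem : ∀ t : Fin d, t ∈ T ↔ d - k + 1 ≤ (t:ℕ) := by
    intro t; simp [hTdef]
  have hTcard : T.card = k - 1 := by
    rw [hTdef, card_filter_ge d (d - k + 1) (by omega)]; omega
  refine ⟨?_, ?_, ?_⟩
  · ext x
    simp only [Set.mem_iInter, Set.mem_inter_iff, Set.mem_setOf_eq]
    constructor
    · intro h i hi; exact le_antisymm (h i hi).2 (h i hi).1
    · intro h i hi; rw [h i hi]; exact ⟨le_refl 0, le_refl 0⟩
  · rintro ⟨u, V, hrank, hsub⟩
    have hu : ∀ i : Fin d, (i:ℕ) < d - k + 1 → u i = 0 := by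
      intro i hi
      have h0 := hsub (Set.mem_image_of_mem _ (zero_mem_posHull (V := V))) i hi
      simpa using h0
    have hvmem : ∀ v ∈ V, v ∈ Submodule.span ℝ (ee '' (↑T : Set (Fin d))) := by
      intro v hv
      have h2 := hsub (Set.mem_image_of_mem _ (mem_posHull_self hv))
      have hvz : ∀ j : Fin d, (j:ℕ) < d - k + 1 → v j = 0 := by
        intro j hj
        have h3 : u j + v j = 0 := h2 j hj
        have h4 := hu j hj
        linarith
      have hrepr : v = ∑ j ∈ T, v j • ee j := by
        ext j'
        rw [sum_ee_apply]
        by_cases hj : j' ∈ T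
        · simp [hj]
        · simp only [hj, if_false]
          exact hvz j' (by rw [hTmem] at hj; omega)
      rw [hrepr]
      exact Submodule.sum_mem _ fun j hj =>
        Submodule.smul_mem _ _ (Submodule.subset_span ⟨j, by simpa using hj, rfl⟩)
    have hle : Submodule.span ℝ V ≤ Submodule.span ℝ (ee '' (↑T : Set (Fin d))) :=
      Submodule.span_le.mpr hvmem
    have h6 : Module.finrank ℝ (Submodule.span ℝ (ee '' (↑T : Set (Fin d)))) = k - 1 := by
      rw [span_ee_card, hTcard]
    have h7 := Submodule.finrank_mono hle
    rw [hrank, h6] at h7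
    omega
  · intro i hi
    have hiT : i ∉ T := by rw [hTmem]; omega
    have hjTne : ∀ j : Fin d, (j:ℕ) < d - k + 1 → ∀ t ∈ T, j ≠ t := by
      intro j hj t ht
      rw [hTmem] at ht
      intro h; rw [h] at hj; omega
    constructor
    · refine ⟨insert ((-1 : ℝ) • ee i) (ee '' ↑T ∪ -(ee '' ↑T)), ?_, ?_⟩
      · rw [span_V i T hiT (-1) (IsUnit.neg isUnit_one), hTcard]; omega
      · intro x hx
        have hxi : x i ≤ 0 := by
          refine posHull_nonpos (coordL i) ?_ x hx
          intro v hv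
          rcases (V_coord (-1) i T v hv i (hjTne i hi)).2 rfl with h | h
          · show v i ≤ 0; rw [h]; norm_num
          · show v i ≤ 0; rw [h]
        have hxj : ∀ j : Fin d, (j:ℕ) < d - k + 1 → j ≠ i → x j = 0 := by
          intro j hj hji
          exact posHull_zero (coordL j)
            (fun v hv => (V_coord (-1) i T v hv j (hjTne j hj)).1 hji) x hx
        refine ⟨hxi, ?_⟩
        simp only [Set.mem_iInter, Set.mem_inter_iff, Set.mem_setOf_eq]
        intro j hj hji
        rw [hxj j hj hji]
        exact ⟨le_refl 0, le_refl 0⟩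
    · refine ⟨insert ((1 : ℝ) • ee i) (ee '' ↑T ∪ -(ee '' ↑T)), ?_, ?_⟩
      · rw [span_V i T hiT 1 isUnit_one, hTcard]; omega
      · intro x hx
        have hxi : 0 ≤ x i := by
          refine posHull_nonneg (coordL i) ?_ x hx
          intro v hv
          rcases (V_coord 1 i T v hv i (hjTne i hi)).2 rfl with h | h
          · show (0:ℝ) ≤ v i; rw [h]; norm_num
          · show (0:ℝ) ≤ v i; rw [h]
        have hxj : ∀ j : Fin d, (j:ℕ) < d - k + 1 → j ≠ i → x j = 0 := by
          intro j hj hji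
          exact posHull_zero (coordL j)
            (fun v hv => (V_coord 1 i T v hv j (hjTne j hj)).1 hji) x hx
        refine ⟨hxi, ?_⟩
        simp only [Set.mem_iInter, Set.mem_inter_iff, Set.mem_setOf_eq]
        intro j hj hji
        rw [hxj j hj hji]
        exact ⟨le_refl 0, le_refl 0⟩
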